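/- Let T1, T2 be bounded linear operators on H with A-adjoints S1 = T1^{#_A}, S2 = T2^{#_A} (i.e. A∘S_i = T_i*∘A and range(S_i) ⊆ closure(range A)). Then max(‖T1+T2‖_A², ‖T1-T2‖_A²) ≤ min(‖S1∘T1 + S2∘T2‖_A + ‖S1∘T2 + S2∘T1‖_A, ‖T1∘S1 + T2∘S2‖_A + ‖T1∘S2 + T2∘S1‖_A). -/

import Mathlib

set_option linter.unusedSectionVars false
set_option maxHeartbeats 1000000

open scoped InnerProductSpace
open ContinuousLinearMap

variable {H : Type*} [NormedAddCommGroup H] [InnerProductSpace ℂ H] [CompleteSpace H]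

/-- The `A`-seminorm `‖x‖_A = √⟨Ax,x⟩`. -/
noncomputable def aNorm (A : H →L[ℂ] H) (x : H) : ℝ :=
  Real.sqrt (⟪A x, x⟫_ℂ).re

/-- The `A`-numerical radius `w_A(T) = sup {|⟨ATx,x⟩| : x ∈ H, ‖x‖_A = 1}`. -/
noncomputable def wA (A T : H →L[ℂ] H) : ℝ :=
  sSup {r : ℝ | ∃ x : H, aNorm A x = 1 ∧ r = ‖⟪A (T x), x⟫_ℂ‖}

/-- The `A`-operator seminorm `‖T‖_A = sup {‖Tx‖_A : x ∈ closure (range A), ‖x‖_A = 1}`. -/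
noncomputable def aOpNorm (A T : H →L[ℂ] H) : ℝ :=
  sSup {r : ℝ | ∃ x : H, x ∈ closure (Set.range (⇑A)) ∧ aNorm A x = 1 ∧ r = aNorm A (T x)}

/-- The `B`-numerical radius of the operator matrix `[[T1,T2],[T3,T4]]` acting on `H ⊕ H` by
`(x, y) ↦ (T1 x + T2 y, T3 x + T4 y)`, where `B = [[A,0],[0,A]]`:
`w_B(T) = sup {|⟨BTz,z⟩| : z ∈ H ⊕ H, ‖z‖_B = 1}`. -/
noncomputable def wB (A T1 T2 T3 T4 : H →L[ℂ] H) : ℝ :=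
  sSup {r : ℝ | ∃ x y : H, Real.sqrt ((⟪A x, x⟫_ℂ).re + (⟪A y, y⟫_ℂ).re) = 1 ∧
    r = ‖⟪A (T1 x + T2 y), x⟫_ℂ + ⟪A (T3 x + T4 y), y⟫_ℂ‖}

section AuxLemmas

variable {A : H →L[ℂ] H} (hA : A.IsPositive)

lemma aNorm_nonneg' (x : H) : 0 ≤ aNorm A x := Real.sqrt_nonneg _

include hA

lemma csA (x y : H) : ‖⟪A x, y⟫_ℂ‖ ≤ aNorm A x * aNorm A y := by
  unfold aNorm
  have hsym := hA.isSelfAdjoint.isSymmetric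
  have key : ‖⟪A x, y⟫_ℂ‖ * ‖⟪A y, x⟫_ℂ‖ ≤ (⟪A x, x⟫_ℂ).re * (⟪A y, y⟫_ℂ).re := by
    letI c : PreInnerProductSpace.Core ℂ H :=
      { inner := fun u v => ⟪A u, v⟫_ℂ
        conj_inner_symm := fun u v => by
          rw [← inner_conj_symm, Complex.conj_conj]
          exact (hsym.apply_clm u v).symm
        re_inner_nonneg := fun u => hA.re_inner_nonneg_left u
        add_left := fun u v w => by simp [map_add, inner_add_left]
        smul_left := fun u v r => by simp [map_smul, inner_smul_left, mul_comm] }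
    exact InnerProductSpace.Core.inner_mul_inner_self_le (𝕜 := ℂ) (F := H) x y
  have h1 : ‖⟪A y, x⟫_ℂ‖ = ‖⟪A x, y⟫_ℂ‖ := by
    rw [← inner_conj_symm, RCLike.norm_conj, ← hsym.apply_clm]
  rw [h1] at key
  have h2 : ‖⟪A x, y⟫_ℂ‖ = Real.sqrt (‖⟪A x, y⟫_ℂ‖ * ‖⟪A x, y⟫_ℂ‖) :=
    (Real.sqrt_mul_self (norm_nonneg _)).symm
  have hx : (0:ℝ) ≤ (⟪A x, x⟫_ℂ).re := hA.re_inner_nonneg_left x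
  rw [h2, ← Real.sqrt_mul hx]
  exact Real.sqrt_le_sqrt key

lemma aNorm_sq' (x : H) : (aNorm A x) ^ 2 = (⟪A x, x⟫_ℂ).re :=
  Real.sq_sqrt (hA.re_inner_nonneg_left x)

lemma apply_eq_zero (x : H) (hx : aNorm A x = 0) : A x = 0 := by
  have h : ‖⟪A x, A x⟫_ℂ‖ ≤ 0 := by
    have := csA hA x (A x)
    rw [hx, zero_mul] at this
    exact this
  exact inner_self_eq_zero.mp (norm_le_zero_iff.mp h)

lemma aNorm_smul' (r : ℝ) (hr : 0 ≤ r) (x : H) : aNorm A ((r : ℂ) • x) = r * aNorm A x := by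
  unfold aNorm
  rw [map_smul, inner_smul_left, inner_smul_right, Complex.conj_ofReal]
  have : ((r : ℂ) * ((r:ℂ) * ⟪A x, x⟫_ℂ)).re = r ^ 2 * (⟪A x, x⟫_ℂ).re := by
    simp [Complex.mul_re, Complex.ofReal_re, Complex.ofReal_im]; ring
  rw [this, Real.sqrt_mul (sq_nonneg r), Real.sqrt_sq hr]

lemma aNorm_le_sqrt_norm (x : H) : aNorm A x ≤ Real.sqrt ‖A‖ * ‖x‖ := by
  have h1 : (⟪A x, x⟫_ℂ).re ≤ ‖A‖ * ‖x‖ ^ 2 := by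
    calc (⟪A x, x⟫_ℂ).re ≤ ‖⟪A x, x⟫_ℂ‖ := Complex.re_le_norm _
      _ ≤ ‖A x‖ * ‖x‖ := norm_inner_le_norm _ _
      _ ≤ ‖A‖ * ‖x‖ * ‖x‖ := by
          have := A.le_opNorm x
          nlinarith [norm_nonneg x]
      _ = ‖A‖ * ‖x‖ ^ 2 := by ring
  calc aNorm A x ≤ Real.sqrt (‖A‖ * ‖x‖ ^ 2) := Real.sqrt_le_sqrt h1
    _ = Real.sqrt ‖A‖ * ‖x‖ := by
        rw [Real.sqrt_mul (norm_nonneg A), Real.sqrt_sq (norm_nonneg x)]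

include hA

/-- If `W` is `A`-selfadjoint then `‖Wx‖_A ≤ ‖W‖ ‖x‖_A`. -/
lemma aNorm_apply_le {W : H →L[ℂ] H} (hW : A ∘L W = adjoint W ∘L A) (x : H) :
    aNorm A (W x) ≤ ‖W‖ * aNorm A x := by
  -- commutation for powers
  have hc : ∀ (u v : H), ⟪A (W u), v⟫_ℂ = ⟪A u, W v⟫_ℂ := by
    intro u v
    have : A (W u) = adjoint W (A u) := by
      have := congrArg (fun f => f u) hW
      simpa [ContinuousLinearMap.comp_apply] using this
    rw [this, ContinuousLinearMap.adjoint_inner_left]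
  have hck : ∀ (k : ℕ) (u v : H), ⟪A ((W ^ k) u), v⟫_ℂ = ⟪A u, (W ^ k) v⟫_ℂ := by
    intro k
    induction k with
    | zero => intro u v; simp
    | succ n ih =>
      intro u v
      have e1 : (W ^ (n + 1)) u = (W ^ n) (W u) := by
        rw [pow_succ]; rfl
      have e2 : W ((W ^ n) v) = (W ^ (n + 1)) v := by
        rw [pow_succ']; rfl
      rw [e1, ih (W u) v, hc u ((W ^ n) v), e2]
  have step : ∀ (k : ℕ), (aNorm A ((W ^ k) x)) ^ 2 ≤ aNorm A x * aNorm A ((W ^ (2 * k)) x) := by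
    intro k
    rw [aNorm_sq' hA]
    have e : ⟪A ((W ^ k) x), (W ^ k) x⟫_ℂ = ⟪A x, (W ^ (2 * k)) x⟫_ℂ := by
      rw [hck k x ((W ^ k) x)]
      congr 1
      rw [two_mul, pow_add]; rfl
    rw [e]
    exact le_trans (Complex.re_le_norm _) (csA hA x _)
  have main : ∀ (n : ℕ), (aNorm A (W x)) ^ (2 ^ n) ≤
      (aNorm A x) ^ (2 ^ n - 1) * aNorm A ((W ^ (2 ^ n)) x) := by
    intro n
    induction n with
    | zero => simpa using le_of_eq (by rw [pow_one])
    | succ n ih =>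
      have h2n : 1 ≤ 2 ^ n := Nat.one_le_two_pow
      calc (aNorm A (W x)) ^ (2 ^ (n + 1)) = ((aNorm A (W x)) ^ (2 ^ n)) ^ 2 := by
            rw [← pow_mul, pow_succ]
        _ ≤ ((aNorm A x) ^ (2 ^ n - 1) * aNorm A ((W ^ (2 ^ n)) x)) ^ 2 :=
            pow_le_pow_left₀ (pow_nonneg (aNorm_nonneg' _) _) ih 2
        _ = (aNorm A x) ^ (2 * (2 ^ n - 1)) * (aNorm A ((W ^ (2 ^ n)) x)) ^ 2 := by
            rw [mul_pow, ← pow_mul]; ring_nf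
        _ ≤ (aNorm A x) ^ (2 * (2 ^ n - 1)) *
            (aNorm A x * aNorm A ((W ^ (2 * 2 ^ n)) x)) := by
            apply mul_le_mul_of_nonneg_left (step (2 ^ n))
            exact pow_nonneg (aNorm_nonneg' _) _
        _ = (aNorm A x) ^ (2 ^ (n + 1) - 1) * aNorm A ((W ^ (2 ^ (n + 1))) x) := by
            have e1 : 2 * (2 ^ n - 1) + 1 = 2 ^ (n + 1) - 1 := by omega
            have e2 : 2 * 2 ^ n = 2 ^ (n + 1) := by ring
            rw [e2, ← e1, pow_succ _ (2 * (2 ^ n - 1))]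
            ring
  -- conclude
  by_cases hx0 : aNorm A x = 0
  · have h := step 1
    rw [pow_one, hx0, zero_mul] at h
    have : aNorm A (W x) = 0 := by nlinarith [aNorm_nonneg' (A := A) (W x)]
    rw [this, hx0, mul_zero]
  · by_cases hW0 : ‖W‖ = 0
    · have : W = 0 := norm_eq_zero.mp hW0
      subst this
      simp [aNorm]
    · have hc0 : 0 < aNorm A x := lt_of_le_of_ne (aNorm_nonneg' x) (Ne.symm hx0)
      have hw0 : 0 < ‖W‖ := lt_of_le_of_ne (norm_nonneg W) (Ne.symm hW0)
      by_contra hcon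
      push_neg at hcon
      set b := aNorm A (W x) with hb
      set c := aNorm A x with hcdef
      set w := ‖W‖ with hwdef
      have hq : 1 < b / (w * c) := by
        rw [lt_div_iff₀ (by positivity)]
        linarith [hcon]
      set K := Real.sqrt ‖A‖ * ‖x‖ / c with hK
      obtain ⟨n, hn⟩ : ∃ n : ℕ, K < (b / (w * c)) ^ n :=
        ((tendsto_pow_atTop_atTop_of_one_lt hq).eventually (Filter.eventually_gt_atTop K)).exists
      have hn2 : K < (b / (w * c)) ^ (2 ^ n) :=
        lt_of_lt_of_le hn (pow_le_pow_right₀ (le_of_lt hq) (Nat.le_of_lt (Nat.lt_two_pow_self (n := n))))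
      -- upper bound
      have hub : b ^ (2 ^ n) ≤ c ^ (2 ^ n - 1) * (Real.sqrt ‖A‖ * (w ^ (2 ^ n) * ‖x‖)) := by
        calc b ^ (2 ^ n) ≤ c ^ (2 ^ n - 1) * aNorm A ((W ^ (2 ^ n)) x) := main n
          _ ≤ c ^ (2 ^ n - 1) * (Real.sqrt ‖A‖ * ‖(W ^ (2 ^ n)) x‖) := by
              apply mul_le_mul_of_nonneg_left (aNorm_le_sqrt_norm hA _)
              exact pow_nonneg (le_of_lt hc0) _
          _ ≤ c ^ (2 ^ n - 1) * (Real.sqrt ‖A‖ * (w ^ (2 ^ n) * ‖x‖)) := by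
              apply mul_le_mul_of_nonneg_left _ (pow_nonneg (le_of_lt hc0) _)
              apply mul_le_mul_of_nonneg_left _ (Real.sqrt_nonneg _)
              calc ‖(W ^ (2 ^ n)) x‖ ≤ ‖W ^ (2 ^ n)‖ * ‖x‖ := le_opNorm _ _
                _ ≤ w ^ (2 ^ n) * ‖x‖ :=
                    mul_le_mul_of_nonneg_right (norm_pow_le' W (Nat.two_pow_pos n)) (norm_nonneg x)
      -- lower bound from hn2
      have hlb : (w * c) ^ (2 ^ n) * K < b ^ (2 ^ n) := by
        have := mul_lt_mul_of_pos_left hn2 (show (0:ℝ) < (w * c) ^ (2 ^ n) by positivity)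
        calc (w * c) ^ (2 ^ n) * K < (w * c) ^ (2 ^ n) * (b / (w * c)) ^ (2 ^ n) := this
          _ = b ^ (2 ^ n) := by
              rw [← mul_pow, mul_div_cancel₀ _ (by positivity : w * c ≠ 0)]
      have heq : (w * c) ^ (2 ^ n) * K = c ^ (2 ^ n - 1) * (Real.sqrt ‖A‖ * (w ^ (2 ^ n) * ‖x‖)) := by
        have h1 : 1 ≤ 2 ^ n := Nat.one_le_two_pow
        have e : (2 : ℕ) ^ n = (2 ^ n - 1) + 1 := by omega
        rw [hK, mul_pow]
        rw [e, pow_succ c]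
        field_simp
        ring_nf
        rw [Nat.add_sub_cancel_left]
      rw [heq] at hlb
      linarith
omit hA

lemma aOpNorm_nonneg (T : H →L[ℂ] H) : 0 ≤ aOpNorm A T := by
  apply Real.sSup_nonneg
  rintro r ⟨x, -, -, rfl⟩
  exact aNorm_nonneg' _

lemma aOpNorm_le {T : H →L[ℂ] H} {C : ℝ} (hC : 0 ≤ C)
    (h : ∀ x, x ∈ closure (Set.range (⇑A)) → aNorm A x = 1 → aNorm A (T x) ≤ C) :
    aOpNorm A T ≤ C := by
  apply Real.sSup_le _ hC
  rintro r ⟨x, hx, h1, rfl⟩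
  exact h x hx h1

lemma le_aOpNorm {T : H →L[ℂ] H} {C : ℝ}
    (hbdd : ∀ y, aNorm A (T y) ≤ C * aNorm A y) {x : H}
    (hx : x ∈ closure (Set.range (⇑A))) (h1 : aNorm A x = 1) :
    aNorm A (T x) ≤ aOpNorm A T := by
  apply le_csSup
  · refine ⟨C, ?_⟩
    rintro r ⟨y, -, hy1, rfl⟩
    simpa [hy1] using hbdd y
  · exact ⟨x, hx, h1, rfl⟩

lemma aOpNorm_neg (T : H →L[ℂ] H) (hA : A.IsPositive) : aOpNorm A (-T) = aOpNorm A T := by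
  unfold aOpNorm
  congr 1
  ext r
  constructor
  · rintro ⟨x, hx, h1, rfl⟩
    refine ⟨x, hx, h1, ?_⟩
    show aNorm A (-(T x)) = _
    unfold aNorm
    rw [map_neg, inner_neg_neg]
  · rintro ⟨x, hx, h1, rfl⟩
    refine ⟨x, hx, h1, ?_⟩
    show _ = aNorm A (-(T x))
    unfold aNorm
    rw [map_neg, inner_neg_neg]

include hA

/-- Flip an A-adjoint relation. -/
lemma flipAdj {P Q : H →L[ℂ] H} (h : A ∘L Q = adjoint P ∘L A) :
    A ∘L P = adjoint Q ∘L A := by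
  have hAsa : adjoint A = A := hA.isSelfAdjoint.adjoint_eq
  have := congrArg adjoint h
  rw [adjoint_comp, adjoint_comp, adjoint_adjoint, hAsa] at this
  exact this.symm

/-- The operators Q1∘P1 + Q2∘P2 / Q1∘P2 + Q2∘P1 are A-selfadjoint. -/
lemma WsaA {P1 P2 Q1 Q2 : H →L[ℂ] H}
    (h1 : A ∘L Q1 = adjoint P1 ∘L A) (h2 : A ∘L Q2 = adjoint P2 ∘L A) :
    A ∘L (Q1 ∘L P1 + Q2 ∘L P2) = adjoint (Q1 ∘L P1 + Q2 ∘L P2) ∘L A := by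
  have f1 := flipAdj hA h1
  have f2 := flipAdj hA h2
  have e1 : A ∘L (Q1 ∘L P1) = adjoint (Q1 ∘L P1) ∘L A := by
    rw [adjoint_comp]
    calc A ∘L (Q1 ∘L P1) = (A ∘L Q1) ∘L P1 := by rw [comp_assoc]
      _ = (adjoint P1 ∘L A) ∘L P1 := by rw [h1]
      _ = adjoint P1 ∘L (A ∘L P1) := by rw [comp_assoc]
      _ = adjoint P1 ∘L (adjoint Q1 ∘L A) := by rw [f1]
      _ = (adjoint P1 ∘L adjoint Q1) ∘L A := by rw [comp_assoc]
  have e2 : A ∘L (Q2 ∘L P2) = adjoint (Q2 ∘L P2) ∘L A := by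
    rw [adjoint_comp]
    calc A ∘L (Q2 ∘L P2) = (A ∘L Q2) ∘L P2 := by rw [comp_assoc]
      _ = (adjoint P2 ∘L A) ∘L P2 := by rw [h2]
      _ = adjoint P2 ∘L (A ∘L P2) := by rw [comp_assoc]
      _ = adjoint P2 ∘L (adjoint Q2 ∘L A) := by rw [f2]
      _ = (adjoint P2 ∘L adjoint Q2) ∘L A := by rw [comp_assoc]
  rw [comp_add, map_add, add_comp, e1, e2]

/-- Main one-sided estimate. -/
lemma side1 {P1 P2 Q1 Q2 : H →L[ℂ] H}
    (h1 : A ∘L Q1 = adjoint P1 ∘L A) (h2 : A ∘L Q2 = adjoint P2 ∘L A) :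
    (aOpNorm A (P1 + P2)) ^ 2 ≤
      aOpNorm A (Q1 ∘L P1 + Q2 ∘L P2) + aOpNorm A (Q1 ∘L P2 + Q2 ∘L P1) := by
  set W1 := Q1 ∘L P1 + Q2 ∘L P2 with hW1
  set W2 := Q1 ∘L P2 + Q2 ∘L P1 with hW2
  have hw1sa : A ∘L W1 = adjoint W1 ∘L A := WsaA hA h1 h2
  have hw2sa : A ∘L W2 = adjoint W2 ∘L A := by
    have f1 := flipAdj hA h1
    have f2 := flipAdj hA h2
    have e1 : A ∘L (Q1 ∘L P2) = (adjoint P1 ∘L adjoint Q2) ∘L A := by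
      calc A ∘L (Q1 ∘L P2) = (A ∘L Q1) ∘L P2 := by rw [comp_assoc]
        _ = (adjoint P1 ∘L A) ∘L P2 := by rw [h1]
        _ = adjoint P1 ∘L (A ∘L P2) := by rw [comp_assoc]
        _ = adjoint P1 ∘L (adjoint Q2 ∘L A) := by rw [f2]
        _ = (adjoint P1 ∘L adjoint Q2) ∘L A := by rw [comp_assoc]
    have e2 : A ∘L (Q2 ∘L P1) = (adjoint P2 ∘L adjoint Q1) ∘L A := by
      calc A ∘L (Q2 ∘L P1) = (A ∘L Q2) ∘L P1 := by rw [comp_assoc]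
        _ = (adjoint P2 ∘L A) ∘L P1 := by rw [h2]
        _ = adjoint P2 ∘L (A ∘L P1) := by rw [comp_assoc]
        _ = adjoint P2 ∘L (adjoint Q1 ∘L A) := by rw [f1]
        _ = (adjoint P2 ∘L adjoint Q1) ∘L A := by rw [comp_assoc]
    rw [hW2, comp_add, map_add, add_comp, adjoint_comp, adjoint_comp, e1, e2]
    abel
  set B := aOpNorm A W1 + aOpNorm A W2 with hB
  have hBnn : 0 ≤ B := add_nonneg (aOpNorm_nonneg _) (aOpNorm_nonneg _)
  have key : aOpNorm A (P1 + P2) ≤ Real.sqrt B := by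
    apply aOpNorm_le (Real.sqrt_nonneg _)
    intro x hx h1x
    have hr : 0 ≤ aNorm A ((P1 + P2) x) := aNorm_nonneg' _
    rw [show aNorm A ((P1+P2) x) = Real.sqrt ((aNorm A ((P1+P2) x))^2) from
      (Real.sqrt_sq hr).symm]
    apply Real.sqrt_le_sqrt
    -- (‖(P1+P2)x‖_A)² ≤ B
    have f1 := flipAdj hA h1
    have f2 := flipAdj hA h2
    have hid : ⟪A ((P1 + P2) x), (P1 + P2) x⟫_ℂ = ⟪A x, W1 x⟫_ℂ + ⟪A x, W2 x⟫_ℂ := by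
      have hap : A ((P1 + P2) x) = adjoint (Q1 + Q2) (A x) := by
        have : A ∘L (P1 + P2) = adjoint (Q1 + Q2) ∘L A := by
          rw [comp_add, f1, f2, map_add, add_comp]
        have := congrArg (fun f => f x) this
        simpa [ContinuousLinearMap.comp_apply] using this
      rw [hap, ContinuousLinearMap.adjoint_inner_left]
      have : (Q1 + Q2) ((P1 + P2) x) = W1 x + W2 x := by
        simp only [hW1, hW2, ContinuousLinearMap.add_apply, ContinuousLinearMap.comp_apply,
          ContinuousLinearMap.coe_add', Pi.add_apply, map_add]
        abel
      rw [this, inner_add_right]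
    have est : (aNorm A ((P1 + P2) x)) ^ 2 ≤ aNorm A (W1 x) + aNorm A (W2 x) := by
      rw [aNorm_sq' hA, hid]
      calc (⟪A x, W1 x⟫_ℂ + ⟪A x, W2 x⟫_ℂ).re
          ≤ ‖⟪A x, W1 x⟫_ℂ + ⟪A x, W2 x⟫_ℂ‖ := Complex.re_le_norm _
        _ ≤ ‖⟪A x, W1 x⟫_ℂ‖ + ‖⟪A x, W2 x⟫_ℂ‖ := norm_add_le _ _
        _ ≤ aNorm A x * aNorm A (W1 x) + aNorm A x * aNorm A (W2 x) :=
            add_le_add (csA hA x _) (csA hA x _)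
        _ = aNorm A (W1 x) + aNorm A (W2 x) := by rw [h1x]; ring
    refine le_trans est (add_le_add ?_ ?_)
    · exact le_aOpNorm (fun y => aNorm_apply_le hA hw1sa y) hx h1x
    · exact le_aOpNorm (fun y => aNorm_apply_le hA hw2sa y) hx h1x
  calc (aOpNorm A (P1 + P2)) ^ 2 ≤ (Real.sqrt B) ^ 2 :=
        pow_le_pow_left₀ (aOpNorm_nonneg _) key 2
    _ = B := Real.sq_sqrt hBnn

/-- Uniform bound: `‖Sy‖_A ≤ √‖T∘S‖ ‖y‖_A` when `S` is an `A`-adjoint of `T`. -/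
lemma aS_bound {S T : H →L[ℂ] H} (hS : A ∘L S = adjoint T ∘L A) (y : H) :
    aNorm A (S y) ≤ Real.sqrt ‖T ∘L S‖ * aNorm A y := by
  have hT := flipAdj hA hS
  have hTS : A ∘L (T ∘L S) = adjoint (T ∘L S) ∘L A := by
    rw [adjoint_comp]
    calc A ∘L (T ∘L S) = (A ∘L T) ∘L S := by rw [comp_assoc]
      _ = (adjoint S ∘L A) ∘L S := by rw [hT]
      _ = adjoint S ∘L (A ∘L S) := by rw [comp_assoc]
      _ = adjoint S ∘L (adjoint T ∘L A) := by rw [hS]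
      _ = (adjoint S ∘L adjoint T) ∘L A := by rw [comp_assoc]
  have key : (aNorm A (S y)) ^ 2 ≤ ‖T ∘L S‖ * (aNorm A y) ^ 2 := by
    rw [aNorm_sq' hA]
    have e : ⟪A (S y), S y⟫_ℂ = ⟪A y, (T ∘L S) y⟫_ℂ := by
      have : A (S y) = adjoint T (A y) := by
        have := congrArg (fun f => f y) hS
        simpa [ContinuousLinearMap.comp_apply] using this
      rw [this, ContinuousLinearMap.adjoint_inner_left]
      rfl
    rw [e]
    calc (⟪A y, (T ∘L S) y⟫_ℂ).re ≤ ‖⟪A y, (T ∘L S) y⟫_ℂ‖ := Complex.re_le_norm _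
      _ ≤ aNorm A y * aNorm A ((T ∘L S) y) := csA hA _ _
      _ ≤ aNorm A y * (‖T ∘L S‖ * aNorm A y) := by
          apply mul_le_mul_of_nonneg_left (aNorm_apply_le hA hTS y) (aNorm_nonneg' _)
      _ = ‖T ∘L S‖ * (aNorm A y) ^ 2 := by ring
  have := Real.sqrt_le_sqrt key
  rw [Real.sqrt_sq (aNorm_nonneg' (S y))] at this
  calc aNorm A (S y) ≤ Real.sqrt (‖T ∘L S‖ * (aNorm A y) ^ 2) := this
    _ = Real.sqrt ‖T ∘L S‖ * aNorm A y := by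
        rw [Real.sqrt_mul (norm_nonneg _), Real.sqrt_sq (aNorm_nonneg' y)]

/-- `‖Su‖_A ≤ ‖S‖_A ‖u‖_A` for all `u`, when `S` is an `A`-adjoint of `T`. -/
lemma aNorm_S_le_aOpNorm {S T : H →L[ℂ] H} (hS : A ∘L S = adjoint T ∘L A) (u : H) :
    aNorm A (S u) ≤ aOpNorm A S * aNorm A u := by
  classical
  set K := (LinearMap.range (A : H →ₗ[ℂ] H)).topologicalClosure with hKdef
  haveI : CompleteSpace K := (Submodule.isClosed_topologicalClosure _).completeSpace_coe
  have hKset : (K : Set H) = closure (Set.range (⇑A)) := by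
    rw [hKdef, Submodule.topologicalClosure_coe]
    congr 1
  set v : H := (Submodule.orthogonalProjection K u : H) with hv
  have hvK : v ∈ K := (Submodule.orthogonalProjection K u).2
  set q : H := u - v with hq
  have hqmem : q ∈ Kᗮ := Submodule.sub_starProjection_mem_orthogonal (K := K) u
  -- A q = 0
  have hAq : A q = 0 := by
    apply apply_eq_zero hA
    have : ⟪A q, q⟫_ℂ = 0 := by
      have hAqK : A q ∈ K := by
        apply Submodule.le_topologicalClosure
        exact LinearMap.mem_range_self _ q
      exact (Submodule.mem_orthogonal K q).mp hqmem (A q) hAqK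
    unfold aNorm
    rw [this]
    simp
  have huv : A u = A v := by
    have : u = v + q := by rw [hq]; abel
    rw [this, map_add, hAq, add_zero]
  -- aNorm A u = aNorm A v
  have hNu : aNorm A u = aNorm A v := by
    unfold aNorm
    congr 1
    rw [huv]
    have : ⟪A v, u⟫_ℂ = ⟪A v, v⟫_ℂ + ⟪A v, q⟫_ℂ := by
      rw [show u = v + q from by rw [hq]; abel, inner_add_right]
    rw [this]
    have hz : ⟪A v, q⟫_ℂ = 0 := by
      have hAvK : A v ∈ K := Submodule.le_topologicalClosure _ (LinearMap.mem_range_self _ v)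
      exact (Submodule.mem_orthogonal K q).mp hqmem (A v) hAvK
    rw [hz, add_zero]
  -- A (S q) = 0 hence aNorm A (S u) = aNorm A (S v)
  have hASq : A (S q) = 0 := by
    have := congrArg (fun f => f q) hS
    simp only [ContinuousLinearMap.comp_apply] at this
    rw [this, hAq, map_zero]
  have hNSu : aNorm A (S u) = aNorm A (S v) := by
    unfold aNorm
    congr 1
    have e1 : S u = S v + S q := by rw [show u = v + q from by rw [hq]; abel, map_add]
    rw [e1, map_add, hASq, add_zero, inner_add_right]
    have hz : ⟪A (S v), S q⟫_ℂ = 0 := by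
      rw [hA.isSelfAdjoint.isSymmetric.apply_clm (S v) (S q), hASq, inner_zero_right]
    rw [hz, add_zero]
  rw [hNSu, hNu]
  -- now v ∈ K
  by_cases hv0 : aNorm A v = 0
  · have hAv : A v = 0 := apply_eq_zero hA v hv0
    have : aNorm A (S v) = 0 := by
      unfold aNorm
      have : A (S v) = 0 := by
        have := congrArg (fun f => f v) hS
        simp only [ContinuousLinearMap.comp_apply] at this
        rw [this, hAv, map_zero]
      rw [this]
      simp
    rw [this, hv0, mul_zero]
  · have hc : 0 < aNorm A v := lt_of_le_of_ne (aNorm_nonneg' v) (Ne.symm hv0)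
    set c := aNorm A v with hcdef
    set x : H := ((c⁻¹ : ℝ) : ℂ) • v with hx
    have hxK : x ∈ closure (Set.range (⇑A)) := by
      rw [← hKset]
      exact K.smul_mem _ hvK
    have hx1 : aNorm A x = 1 := by
      rw [hx, aNorm_smul' hA _ (le_of_lt (inv_pos.mpr hc)), ← hcdef, inv_mul_cancel₀ (ne_of_gt hc)]
    have hvx : v = ((c : ℝ) : ℂ) • x := by
      rw [hx, smul_smul, ← Complex.ofReal_mul, mul_inv_cancel₀ (ne_of_gt hc)]
      simp
    have hSv : aNorm A (S v) = c * aNorm A (S x) := by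
      rw [hvx, map_smul, aNorm_smul' hA _ (le_of_lt hc)]
    rw [hSv]
    have hle : aNorm A (S x) ≤ aOpNorm A S :=
      le_aOpNorm (fun y => aS_bound hA hS y) hxK hx1
    calc c * aNorm A (S x) ≤ c * aOpNorm A S :=
          mul_le_mul_of_nonneg_left hle (le_of_lt hc)
      _ = aOpNorm A S * c := mul_comm _ _

/-- `‖T‖_A ≤ ‖S‖_A`. -/
lemma aOpNorm_T_le {S T : H →L[ℂ] H} (hS : A ∘L S = adjoint T ∘L A) :
    aOpNorm A T ≤ aOpNorm A S := by
  apply Real.sSup_le _ (aOpNorm_nonneg S)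
  rintro r ⟨x, hx, h1, rfl⟩
  have hT := flipAdj hA hS
  have key : (aNorm A (T x)) ^ 2 ≤ aOpNorm A S * aNorm A (T x) := by
    rw [aNorm_sq' hA]
    have e : ⟪A (T x), T x⟫_ℂ = ⟪A x, S (T x)⟫_ℂ := by
      have : A (T x) = adjoint S (A x) := by
        have := congrArg (fun f => f x) hT
        simpa [ContinuousLinearMap.comp_apply] using this
      rw [this, ContinuousLinearMap.adjoint_inner_left]
    rw [e]
    calc (⟪A x, S (T x)⟫_ℂ).re ≤ ‖⟪A x, S (T x)⟫_ℂ‖ := Complex.re_le_norm _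
      _ ≤ aNorm A x * aNorm A (S (T x)) := csA hA _ _
      _ = aNorm A (S (T x)) := by rw [h1, one_mul]
      _ ≤ aOpNorm A S * aNorm A (T x) := aNorm_S_le_aOpNorm hA hS (T x)
  rcases eq_or_lt_of_le (aNorm_nonneg' (A := A) (T x)) with h0 | h0
  · rw [← h0]; exact aOpNorm_nonneg S
  · have := key
    rw [sq] at this
    exact le_of_mul_le_mul_right (by linarith [this]) h0

end AuxLemmas


theorem stmt8 (A T1 T2 S1 S2 : H →L[ℂ] H) (hA : A.IsPositive)
    (hS1 : A ∘L S1 = (ContinuousLinearMap.adjoint T1) ∘L A)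
    (hS1r : Set.range (⇑S1) ⊆ closure (Set.range (⇑A)))
    (hS2 : A ∘L S2 = (ContinuousLinearMap.adjoint T2) ∘L A)
    (hS2r : Set.range (⇑S2) ⊆ closure (Set.range (⇑A))) :
    max ((aOpNorm A (T1 + T2)) ^ 2) ((aOpNorm A (T1 - T2)) ^ 2) ≤
      min (aOpNorm A (S1 ∘L T1 + S2 ∘L T2) + aOpNorm A (S1 ∘L T2 + S2 ∘L T1))
          (aOpNorm A (T1 ∘L S1 + T2 ∘L S2) + aOpNorm A (T1 ∘L S2 + T2 ∘L S1)) := by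
  have hS2n : A ∘L (-S2) = adjoint (-T2) ∘L A := by
    rw [map_neg, comp_neg, neg_comp, hS2]
  have hT1 : A ∘L T1 = adjoint S1 ∘L A := flipAdj hA hS1
  have hT2 : A ∘L T2 = adjoint S2 ∘L A := flipAdj hA hS2
  have hT2n : A ∘L (-T2) = adjoint (-S2) ∘L A := by
    rw [map_neg, comp_neg, neg_comp, hT2]
  have esub : T1 - T2 = T1 + -T2 := sub_eq_add_neg _ _
  have esubS : S1 - S2 = S1 + -S2 := sub_eq_add_neg _ _
  -- side 1, plus
  have s1p : (aOpNorm A (T1 + T2)) ^ 2 ≤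
      aOpNorm A (S1 ∘L T1 + S2 ∘L T2) + aOpNorm A (S1 ∘L T2 + S2 ∘L T1) :=
    side1 hA hS1 hS2
  -- side 1, minus
  have s1m : (aOpNorm A (T1 - T2)) ^ 2 ≤
      aOpNorm A (S1 ∘L T1 + S2 ∘L T2) + aOpNorm A (S1 ∘L T2 + S2 ∘L T1) := by
    have h := side1 hA hS1 hS2n
    have e1 : S1 ∘L T1 + (-S2) ∘L (-T2) = S1 ∘L T1 + S2 ∘L T2 := by
      rw [neg_comp, comp_neg, neg_neg]
    have e2 : S1 ∘L (-T2) + (-S2) ∘L T1 = -(S1 ∘L T2 + S2 ∘L T1) := by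
      rw [comp_neg, neg_comp, neg_add]
    rw [e1, e2, ← esub, aOpNorm_neg _ hA] at h
    exact h
  -- side 2
  have hSsum : A ∘L (S1 + S2) = adjoint (T1 + T2) ∘L A := by
    rw [map_add, comp_add, add_comp, hS1, hS2]
  have hSsub : A ∘L (S1 + -S2) = adjoint (T1 + -T2) ∘L A := by
    rw [map_add, comp_add, add_comp, hS1, hS2n]
  have hTSp : aOpNorm A (T1 + T2) ≤ aOpNorm A (S1 + S2) := aOpNorm_T_le hA hSsum
  have hTSm : aOpNorm A (T1 - T2) ≤ aOpNorm A (S1 - S2) := by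
    rw [esub, esubS]
    exact aOpNorm_T_le hA hSsub
  have s2p : (aOpNorm A (T1 + T2)) ^ 2 ≤
      aOpNorm A (T1 ∘L S1 + T2 ∘L S2) + aOpNorm A (T1 ∘L S2 + T2 ∘L S1) := by
    calc (aOpNorm A (T1 + T2)) ^ 2 ≤ (aOpNorm A (S1 + S2)) ^ 2 :=
          pow_le_pow_left₀ (aOpNorm_nonneg _) hTSp 2
      _ ≤ _ := side1 hA hT1 hT2
  have s2m : (aOpNorm A (T1 - T2)) ^ 2 ≤
      aOpNorm A (T1 ∘L S1 + T2 ∘L S2) + aOpNorm A (T1 ∘L S2 + T2 ∘L S1) := by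
    have h := side1 hA hT1 hT2n
    have e1 : T1 ∘L S1 + (-T2) ∘L (-S2) = T1 ∘L S1 + T2 ∘L S2 := by
      rw [neg_comp, comp_neg, neg_neg]
    have e2 : T1 ∘L (-S2) + (-T2) ∘L S1 = -(T1 ∘L S2 + T2 ∘L S1) := by
      rw [comp_neg, neg_comp, neg_add]
    rw [e1, e2, aOpNorm_neg _ hA] at h
    calc (aOpNorm A (T1 - T2)) ^ 2 ≤ (aOpNorm A (S1 + -S2)) ^ 2 := by
          rw [← esubS]
          exact pow_le_pow_left₀ (aOpNorm_nonneg _) hTSm 2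
      _ ≤ _ := h
  exact max_le (le_min s1p s2p) (le_min s1m s2m)
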